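/- arXiv:2007.02377 — 2 statements merged into one kernel-verified Lean document; each statement's English description precedes it below -/
import Mathlib

section
/- For i,j,k∈{1,…,n}, let S_{i,j,k} = {v} ∪ {v_{a_1},…,v_{a_i}} ∪ {v_{b_1},…,v_{b_j}} ∪ {v_{c_{k+1}},…,v_{c_n}}. Then the cut of S_{i,j,k} is exactly the three edges (v_{a_i},v_{a_{i+1}}), (v_{b_j},v_{b_{j+1}}), (v_{c_k},v_{c_{k+1}}), so cost(S_{i,j,k}) = 3β + T + a_i + b_j − c_k; moreover S_{i,j,k} is a bisection if and only if i+j=k. -/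
open Finset

namespace SCLB

inductive V (n : ℕ) : Type
  | u : V n
  | v : V n
  | A : Fin n → V n
  | B : Fin n → V n
  | C : Fin n → V n
  deriving DecidableEq, Fintype

/-- Edges: `(p, some i)` is the `i`-th edge (0-indexed) on path `p` (`p = 0,1,2` for
`P_A, P_B, P_C`), joining the `(i+1)`-st path vertex to the next one; `(p, none)` is the
special edge `e_A`, `e_B`, `e_C` respectively. -/
abbrev E (n : ℕ) := Fin 3 × Option (Fin n)

def Tsum (n : ℕ) (a b c : Fin n → ℕ) : ℕ := ∑ i, (a i + b i + c i)

def beta (n : ℕ) (a b c : Fin n → ℕ) : ℕ := 4 * Tsum n a b c * n ^ 2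

def firstV {n : ℕ} (f : Fin n → V n) (dflt : V n) : V n :=
  if h : 0 < n then f ⟨0, h⟩ else dflt

def nextV {n : ℕ} (f : Fin n → V n) (top : V n) (i : Fin n) : V n :=
  if h : i.val + 1 < n then f ⟨i.val + 1, h⟩ else top

/-- The two endpoints of each edge. -/
def ends (n : ℕ) : E n → V n × V n
  | (p, none) =>
      if p = 0 then (V.v, firstV V.A V.u)
      else if p = 1 then (V.v, firstV V.B V.u)
      else (V.u, firstV V.C V.v)
  | (p, some i) =>
      if p = 0 then (V.A i, nextV V.A V.u i)
      else if p = 1 then (V.B i, nextV V.B V.u i)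
      else (V.C i, nextV V.C V.v i)

/-- Edge costs. -/
def ecost (n : ℕ) (a b c : Fin n → ℕ) : E n → ℚ
  | (_, none) => 1210 * (n : ℚ) ^ 2 * (2 * (beta n a b c : ℚ) + (Tsum n a b c : ℚ))
  | (p, some i) =>
      if p = 0 then (beta n a b c : ℚ) + (a i : ℚ)
      else if p = 1 then (beta n a b c : ℚ) + (b i : ℚ)
      else (beta n a b c : ℚ) + (Tsum n a b c : ℚ) - (c i : ℚ)

/-- Vertex weights. -/
def wt (n : ℕ) : V n → ℚ
  | V.u => 10 * n
  | V.v => 11 * n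
  | _ => 1

/-- The cut of `S`: edges with exactly one endpoint in `S`. -/
def cut (n : ℕ) (S : Finset (V n)) : Finset (E n) :=
  Finset.univ.filter fun e => ¬(((ends n e).1 ∈ S) ↔ ((ends n e).2 ∈ S))

def cutCost (n : ℕ) (a b c : Fin n → ℕ) (S : Finset (V n)) : ℚ :=
  ∑ e ∈ cut n S, ecost n a b c e

def wOf (n : ℕ) (S : Finset (V n)) : ℚ := ∑ x ∈ S, wt n x

def quotientVal (n : ℕ) (a b c : Fin n → ℕ) (S : Finset (V n)) : ℚ :=
  cutCost n a b c S / min (wOf n S) (wOf n Sᶜ)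

def sparsity (n : ℕ) (a b c : Fin n → ℕ) (S : Finset (V n)) : ℚ :=
  cutCost n a b c S / (wOf n S * wOf n Sᶜ)

def IsBisection (n : ℕ) (S : Finset (V n)) : Prop :=
  wOf n S = 12 * n ∧ wOf n Sᶜ = 12 * n

def PA (n : ℕ) : Finset (E n) := Finset.univ.filter fun e => e.1 = 0
def PB (n : ℕ) : Finset (E n) := Finset.univ.filter fun e => e.1 = 1
def PC (n : ℕ) : Finset (E n) := Finset.univ.filter fun e => e.1 = 2

def inSijk (n : ℕ) (i j k : Fin n) : V n → Bool
  | V.v => true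
  | V.u => false
  | V.A t => decide (t.val ≤ i.val)
  | V.B t => decide (t.val ≤ j.val)
  | V.C t => decide (k.val < t.val)

/-- The set `S_{i,j,k} = {v} ∪ {v_{a_1},…,v_{a_i}} ∪ {v_{b_1},…,v_{b_j}} ∪
{v_{c_{k+1}},…,v_{c_n}}` (here `i, j, k : Fin n` are the 0-indexed versions of the paper's
1-indexed `i, j, k`). -/
def Sijk (n : ℕ) (i j k : Fin n) : Finset (V n) :=
  Finset.univ.filter fun x => inSijk n i j k x = true

def vEquiv (n : ℕ) : V n ≃ (Unit ⊕ Unit ⊕ Fin n ⊕ Fin n ⊕ Fin n) where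
  toFun x := match x with
    | V.u => .inl () | V.v => .inr (.inl ()) | V.A t => .inr (.inr (.inl t))
    | V.B t => .inr (.inr (.inr (.inl t))) | V.C t => .inr (.inr (.inr (.inr t)))
  invFun y := match y with
    | .inl _ => V.u | .inr (.inl _) => V.v | .inr (.inr (.inl t)) => V.A t
    | .inr (.inr (.inr (.inl t))) => V.B t | .inr (.inr (.inr (.inr t))) => V.C t
  left_inv x := by cases x <;> rfl
  right_inv y := by rcases y with _ | _ | t | t | t <;> rfl

lemma sum_V {M : Type*} [AddCommMonoid M] (n : ℕ) (f : V n → M) :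
    ∑ x : V n, f x =
      f V.u + f V.v + (∑ t, f (V.A t)) + (∑ t, f (V.B t)) + (∑ t, f (V.C t)) := by
  rw [← Equiv.sum_comp (vEquiv n).symm f]
  simp [Fintype.sum_sum_type, vEquiv]
  abel

lemma cut_eq (n : ℕ) (hn : 1 < n) (i j k : Fin n) :
    cut n (Sijk n i j k) =
      {((0 : Fin 3), some i), ((1 : Fin 3), some j), ((2 : Fin 3), some k)} := by
  have h0 : 0 < n := by omega
  ext ⟨p, o⟩
  simp only [cut, Finset.mem_filter, Finset.mem_univ, true_and, Finset.mem_insert,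
    Finset.mem_singleton, Sijk, inSijk, Prod.mk.injEq]
  obtain ⟨p, hp⟩ := p
  interval_cases p <;> rcases o with _ | t <;>
    simp only [ends, firstV, nextV, h0, dif_pos, Fin.mk.injEq, Fin.ext_iff, Fin.val_zero,
      Fin.val_one, Option.some.injEq, reduceCtorEq, Option.some.injEq] <;>
    norm_num
  any_goals exact Nat.zero_le _
  all_goals {
    have ht := t.2; have hi := i.2; have hj := j.2; have hk := k.2
    rcases Nat.lt_or_ge (t.val + 1) n with h | h
    · rw [dif_pos h]
      simp only [decide_eq_true_eq, Fin.le_def, Fin.lt_def, Bool.false_eq_true,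
        iff_false, iff_true, not_not, decide_eq_decide, decide_eq_false_iff_not]
      omega
    · rw [dif_neg (by omega : ¬ (t.val + 1 < n))]
      simp only [decide_eq_true_eq, Fin.le_def, Fin.lt_def, Bool.false_eq_true,
        iff_false, iff_true, not_not, decide_eq_decide, decide_eq_false_iff_not]
      omega }

lemma wOf_Sijk (n : ℕ) (hn : 1 < n) (i j k : Fin n) :
    wOf n (Sijk n i j k) = 12 * n + (i.val : ℚ) + (j.val : ℚ) + 1 - (k.val : ℚ) := by
  classical
  rw [wOf, Sijk, Finset.sum_filter, sum_V]
  simp only [inSijk, wt, decide_eq_true_eq]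
  have hA : (Finset.univ.filter fun t : Fin n => t.val ≤ i.val) = Finset.Iic i := by
    ext t
    simp only [Finset.mem_filter, Finset.mem_univ, true_and, Finset.mem_Iic, Fin.le_def]
  have hB : (Finset.univ.filter fun t : Fin n => t.val ≤ j.val) = Finset.Iic j := by
    ext t
    simp only [Finset.mem_filter, Finset.mem_univ, true_and, Finset.mem_Iic, Fin.le_def]
  have hC : (Finset.univ.filter fun t : Fin n => k.val < t.val) = Finset.Ioi k := by
    ext t
    simp only [Finset.mem_filter, Finset.mem_univ, true_and, Finset.mem_Ioi, Fin.lt_def]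
  rw [Finset.sum_boole, Finset.sum_boole, Finset.sum_boole, hA, hB, hC,
    Fin.card_Iic, Fin.card_Iic, Fin.card_Ioi]
  have hk : k.val + 1 ≤ n := k.2
  have hsub : ((n - 1 - k.val : ℕ) : ℚ) = (n : ℚ) - 1 - (k.val : ℚ) := by
    have h1 : n - 1 - k.val = n - (k.val + 1) := by omega
    rw [h1, Nat.cast_sub hk]
    push_cast; ring
  rw [hsub]
  push_cast
  ring

lemma wOf_total (n : ℕ) : (∑ x : V n, wt n x) = 24 * n := by
  rw [sum_V]
  simp [wt]
  ring

/-- The cut of `S_{i,j,k}` is exactly the three edges `(v_{a_i},v_{a_{i+1}})`,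
`(v_{b_j},v_{b_{j+1}})`, `(v_{c_k},v_{c_{k+1}})`; its cost is `3β + T + a_i + b_j − c_k`;
and it is a bisection iff `i + j = k` (in the paper's 1-indexing, i.e.
`(i+1) + (j+1) = (k+1)` for the 0-indexed `i, j, k` used here). -/
theorem Sijk_cut_cost_bisection (n : ℕ) (hn : 1 < n) (a b c : Fin n → ℕ)
    (ha : ∀ i, 0 < a i) (hb : ∀ i, 0 < b i) (hc : ∀ i, 0 < c i)
    (i j k : Fin n) :
    cut n (Sijk n i j k) =
      {((0 : Fin 3), some i), ((1 : Fin 3), some j), ((2 : Fin 3), some k)}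
    ∧ cutCost n a b c (Sijk n i j k) =
        3 * (beta n a b c : ℚ) + (Tsum n a b c : ℚ) + (a i : ℚ) + (b j : ℚ) - (c k : ℚ)
    ∧ (IsBisection n (Sijk n i j k) ↔ i.val + j.val + 1 = k.val) := by
  have h0 : 0 < n := by omega
  have hcut := cut_eq n hn i j k
  refine ⟨hcut, ?_, ?_⟩
  · rw [cutCost, hcut]
    rw [Finset.sum_insert (by simp), Finset.sum_insert (by simp), Finset.sum_singleton]
    simp only [ecost, show ((2:Fin 3) = 0) = False from by decide,
      show ((2:Fin 3) = 1) = False from by decide,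
      show ((1:Fin 3) = 0) = False from by decide, if_false, if_true, if_pos rfl]
    ring
  · have hS := wOf_Sijk n hn i j k
    have hcompl : wOf n (Sijk n i j k) + wOf n (Sijk n i j k)ᶜ = 24 * n := by
      rw [wOf, wOf, Finset.sum_add_sum_compl]
      exact wOf_total n
    constructor
    · rintro ⟨h1, _⟩
      rw [hS] at h1
      have : (i.val : ℚ) + (j.val : ℚ) + 1 = (k.val : ℚ) := by linarith
      exact_mod_cast this
    · intro h
      have hq : (i.val : ℚ) + (j.val : ℚ) + 1 = (k.val : ℚ) := by exact_mod_cast h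
      have h1 : wOf n (Sijk n i j k) = 12 * n := by rw [hS]; linarith
      exact ⟨h1, by linarith⟩


end SCLB
end

section
/- The minimum of the quotient cost(S)/min{w(S),w(V∖S)} over all ∅≠S⊊V in G is at least (3β+T)/(12n) if and only if there is no pair i,j∈{1,…,n} with i+j≤n and a_i + b_j < c_{i+j}. -/
open Finset

namespace SCLB

section Infra

variable {n : ℕ}

/-! ### Generic sum decomposition over `V n` -/

def eqv (n : ℕ) : (Bool ⊕ (Fin n ⊕ Fin n ⊕ Fin n)) ≃ V n where
  toFun x := match x with
    | .inl true => V.u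
    | .inl false => V.v
    | .inr (.inl i) => V.A i
    | .inr (.inr (.inl i)) => V.B i
    | .inr (.inr (.inr i)) => V.C i
  invFun x := match x with
    | V.u => .inl true
    | V.v => .inl false
    | V.A i => .inr (.inl i)
    | V.B i => .inr (.inr (.inl i))
    | V.C i => .inr (.inr (.inr i))
  left_inv x := by rcases x with (_|_)|i|i|i <;> rfl
  right_inv x := by cases x <;> rfl

lemma sum_univ_V (g : V n → ℚ) :
    ∑ x, g x = g V.u + g V.v +
      ((∑ i, g (V.A i)) + (∑ i, g (V.B i)) + (∑ i, g (V.C i))) := by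
  rw [← Equiv.sum_comp (eqv n) g]
  simp [Fintype.sum_sum_type, eqv]
  ring

lemma card_filter_le (k : Fin n) :
    ((univ : Finset (Fin n)).filter (fun i => i ≤ k)).card = k.val + 1 := by
  have h : (univ : Finset (Fin n)).filter (fun i => i ≤ k) = Iic k := by ext; simp
  rw [h, Fin.card_Iic]

lemma card_filter_gt (k : Fin n) :
    ((univ : Finset (Fin n)).filter (fun i => k < i)).card = n - 1 - k.val := by
  have h : (univ : Finset (Fin n)).filter (fun i => k < i) = Ioi k := by ext; simp
  rw [h, Fin.card_Ioi]

/-! ### Chain lemmas along a path -/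

lemma chain_iff (q : ℕ → Prop) (s : ℕ) (m : ℕ)
    (h : ∀ l, s ≤ l → l < m → (q l ↔ q (l + 1))) (hs : s ≤ m) : q m ↔ q s := by
  induction m with
  | zero => simp [Nat.le_zero.mp hs]
  | succ m ih =>
      rcases Nat.eq_or_lt_of_le hs with h1 | h2
      · rw [h1]
      · have hs' : s ≤ m := by omega
        exact (h m hs' (Nat.lt_succ_self m)).symm.trans
          (ih (fun l hl hlm => h l hl (by omega)) hs')

section Path
variable (S : Finset (V n)) (f : Fin n → V n) (top : V n)

def pq (m : ℕ) : Prop := if h : m < n then f ⟨m, h⟩ ∈ S else top ∈ S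

lemma pq_at (i : Fin n) : pq S f top i.val ↔ f i ∈ S := by
  simp [pq, i.isLt]

lemma pq_succ (i : Fin n) : pq S f top (i.val + 1) ↔ nextV f top i ∈ S := by
  unfold pq nextV
  split <;> simp

lemma pq_top : pq S f top n ↔ top ∈ S := by simp [pq]

lemma path_const (hn : 0 < n)
    (hno : ∀ i : Fin n, ((f i ∈ S) ↔ (nextV f top i ∈ S))) :
    (∀ i : Fin n, (f i ∈ S ↔ f ⟨0, hn⟩ ∈ S)) ∧ (top ∈ S ↔ f ⟨0, hn⟩ ∈ S) := by
  have key : ∀ m ≤ n, (pq S f top m ↔ pq S f top 0) := by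
    intro m hm
    refine chain_iff _ 0 m (fun l _ hl => ?_) (Nat.zero_le m)
    have hln : l < n := by omega
    exact ((pq_at S f top ⟨l, hln⟩).trans ((hno ⟨l, hln⟩).trans (pq_succ S f top ⟨l, hln⟩).symm))
  have h0 : pq S f top 0 ↔ f ⟨0, hn⟩ ∈ S := pq_at S f top ⟨0, hn⟩
  constructor
  · intro i
    exact ((pq_at S f top i).symm.trans ((key i.val i.isLt.le).trans h0))
  · exact ((pq_top S f top).symm.trans ((key n le_rfl).trans h0))

lemma path_single (hn : 0 < n) (i₀ : Fin n)
    (hD : ¬((f i₀ ∈ S) ↔ (nextV f top i₀ ∈ S)))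
    (huniq : ∀ i : Fin n, i ≠ i₀ → ((f i ∈ S) ↔ (nextV f top i ∈ S))) :
    (∀ i : Fin n, i.val ≤ i₀.val → (f i ∈ S ↔ f ⟨0, hn⟩ ∈ S)) ∧
    (∀ i : Fin n, i₀.val < i.val → ((f i ∈ S) ↔ ¬(f ⟨0, hn⟩ ∈ S))) ∧
    (top ∈ S ↔ ¬(f ⟨0, hn⟩ ∈ S)) := by
  have hlink : ∀ l : ℕ, (hl : l < n) → l ≠ i₀.val →
      (pq S f top l ↔ pq S f top (l + 1)) := by
    intro l hl hne
    have hni : (⟨l, hl⟩ : Fin n) ≠ i₀ := by simp [Fin.ext_iff, hne]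
    exact ((pq_at S f top ⟨l, hl⟩).trans ((huniq _ hni).trans (pq_succ S f top ⟨l, hl⟩).symm))
  have key1 : ∀ m ≤ i₀.val, (pq S f top m ↔ pq S f top 0) := by
    intro m hm
    refine chain_iff _ 0 m (fun l _ hl => hlink l (by omega) (by omega)) (Nat.zero_le m)
  have hflip : pq S f top (i₀.val + 1) ↔ ¬ pq S f top i₀.val := by
    rw [pq_at, pq_succ]
    rw [not_iff] at hD
    tauto
  have key2 : ∀ m, i₀.val < m → m ≤ n → (pq S f top m ↔ ¬ pq S f top 0) := by
    intro m hm hmn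
    have h := chain_iff (pq S f top) (i₀.val + 1) m
      (fun l hl hlm => hlink l (by omega) (by omega)) hm
    rw [h, hflip, key1 i₀.val le_rfl]
  have h0 : pq S f top 0 ↔ f ⟨0, hn⟩ ∈ S := pq_at S f top ⟨0, hn⟩
  refine ⟨fun i hi => (pq_at S f top i).symm.trans ((key1 i.val hi).trans h0),
    fun i hi => (pq_at S f top i).symm.trans (((key2 i.val hi i.isLt.le)).trans (by rw [h0])),
    (pq_top S f top).symm.trans ((key2 n i₀.isLt le_rfl).trans (by rw [h0]))⟩

end Path
end Infra

section Decomp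

variable {n : ℕ} (a b c : Fin n → ℕ) (S : Finset (V n))

lemma wt_pos (hn : 0 < n) (x : V n) : 0 < wt n x := by
  cases x <;> simp [wt] <;> positivity

lemma wOf_eq (S : Finset (V n)) :
    wOf n S = (if V.u ∈ S then 10 * (n : ℚ) else 0) + (if V.v ∈ S then 11 * (n : ℚ) else 0) +
      ((∑ i, if V.A i ∈ S then (1 : ℚ) else 0) + (∑ i, if V.B i ∈ S then (1 : ℚ) else 0) +
       (∑ i, if V.C i ∈ S then (1 : ℚ) else 0)) := by
  have h : wOf n S = ∑ x, (if x ∈ S then wt n x else 0) := by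
    rw [Finset.sum_ite_mem, Finset.univ_inter, wOf]
  rw [h, sum_univ_V]
  simp [wt]

lemma wOf_pos (hn : 0 < n) (hS : S.Nonempty) : 0 < wOf n S :=
  Finset.sum_pos (fun x _ => wt_pos hn x) hS

lemma wOf_add_compl : wOf n S + wOf n Sᶜ = 24 * n := by
  rw [wOf, wOf, Finset.sum_add_sum_compl, sum_univ_V]
  simp [wt]
  ring

lemma cut_compl : cut n Sᶜ = cut n S := by
  unfold cut
  apply Finset.filter_congr
  intro e _
  simp only [Finset.mem_compl]
  constructor <;> intro h h' <;> exact h (by tauto)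

lemma quotientVal_compl : quotientVal n a b c Sᶜ = quotientVal n a b c S := by
  unfold quotientVal cutCost
  rw [cut_compl, compl_compl, min_comm]

lemma mem_cut (e : E n) : e ∈ cut n S ↔ ¬(((ends n e).1 ∈ S) ↔ ((ends n e).2 ∈ S)) := by
  simp [cut]

lemma cutCost_eq (hn : 0 < n) :
    cutCost n a b c S =
      (if (V.v ∈ S ↔ V.A ⟨0, hn⟩ ∈ S) then 0 else 1210 * (n : ℚ) ^ 2 * (2 * (beta n a b c : ℚ) + (Tsum n a b c : ℚ)))
    + (if (V.v ∈ S ↔ V.B ⟨0, hn⟩ ∈ S) then 0 else 1210 * (n : ℚ) ^ 2 * (2 * (beta n a b c : ℚ) + (Tsum n a b c : ℚ)))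
    + (if (V.u ∈ S ↔ V.C ⟨0, hn⟩ ∈ S) then 0 else 1210 * (n : ℚ) ^ 2 * (2 * (beta n a b c : ℚ) + (Tsum n a b c : ℚ)))
    + (∑ i, if (V.A i ∈ S ↔ nextV V.A V.u i ∈ S) then 0 else (beta n a b c : ℚ) + (a i : ℚ))
    + (∑ i, if (V.B i ∈ S ↔ nextV V.B V.u i ∈ S) then 0 else (beta n a b c : ℚ) + (b i : ℚ))
    + (∑ i, if (V.C i ∈ S ↔ nextV V.C V.v i ∈ S) then 0 else (beta n a b c : ℚ) + (Tsum n a b c : ℚ) - (c i : ℚ)) := by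
  have h10 : ((1 : Fin 3) = 0) = False := by simp
  have h20 : ((2 : Fin 3) = 0) = False := by simp [Fin.ext_iff]
  have h21 : ((2 : Fin 3) = 1) = False := by simp [Fin.ext_iff]
  unfold cutCost cut
  rw [Finset.sum_filter, Fintype.sum_prod_type, Fin.sum_univ_three,
    Fintype.sum_option, Fintype.sum_option, Fintype.sum_option]
  simp only [ends, ecost, firstV, hn, dif_pos, if_pos, h10, h20, h21, if_false, if_true,
    ite_not]
  ring

end Decomp

section MainAux

lemma arith_base (β T nq minv cost bnd : ℚ) (hQ0 : 0 ≤ 3*β+T) (hn : 2 ≤ nq)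
    (hmin : minv ≤ bnd) (h2 : (3*β+T)*bnd ≤ 12*nq*cost) :
    (3*β+T)*minv ≤ 12*nq*cost :=
  le_trans (mul_le_mul_of_nonneg_left hmin hQ0) h2

lemma arith_big (β T nq minv cost : ℚ) (hβ : β = 4*T*nq^2) (hT : 0 ≤ T) (hn : 2 ≤ nq)
    (hmin : minv ≤ 12*nq) (hc : 1210*nq^2*(2*β+T) ≤ cost) : (3*β+T)*minv ≤ 12*nq*cost := by
  have hβ0 : 0 ≤ β := by nlinarith
  have hs : (4:ℚ) ≤ nq^2 := by nlinarith
  refine arith_base β T nq minv cost (12*nq) (by linarith) hn hmin ?_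
  have h2 : 3*β+T ≤ 1210*nq^2*(2*β+T) := by nlinarith [mul_nonneg (by linarith : (0:ℚ) ≤ nq^2 - 4) (by linarith : (0:ℚ) ≤ 2*β+T)]
  have h3 := mul_le_mul_of_nonneg_left (h2.trans hc) (by linarith : (0:ℚ) ≤ 12*nq)
  nlinarith [h3]

lemma arith4 (β T nq minv cost : ℚ) (hβ : β = 4*T*nq^2) (hT : 0 ≤ T) (hn : 2 ≤ nq)
    (hmin : minv ≤ 12*nq) (hc : 4*β ≤ cost) : (3*β+T)*minv ≤ 12*nq*cost := by
  have hβ0 : 0 ≤ β := by nlinarith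
  have hs : (4:ℚ) ≤ nq^2 := by nlinarith
  have hTβ : T ≤ β := by nlinarith [mul_nonneg hT (by linarith : (0:ℚ) ≤ 4*nq^2 - 1)]
  refine arith_base β T nq minv cost (12*nq) (by linarith) hn hmin ?_
  have h3 := mul_le_mul_of_nonneg_left hc (by linarith : (0:ℚ) ≤ 12*nq)
  nlinarith [h3]

lemma arith2 (β T nq minv cost : ℚ) (hβ : β = 4*T*nq^2) (hT : 0 ≤ T) (hn : 2 ≤ nq)
    (hmin : minv ≤ 3*nq) (hc : 2*β ≤ cost) : (3*β+T)*minv ≤ 12*nq*cost := by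
  have hβ0 : 0 ≤ β := by nlinarith
  have hs : (4:ℚ) ≤ nq^2 := by nlinarith
  have hTβ : T ≤ β := by nlinarith [mul_nonneg hT (by linarith : (0:ℚ) ≤ 4*nq^2 - 1)]
  refine arith_base β T nq minv cost (3*nq) (by linarith) hn hmin ?_
  have h3 := mul_le_mul_of_nonneg_left hc (by linarith : (0:ℚ) ≤ 12*nq)
  nlinarith [h3, mul_le_mul_of_nonneg_right hTβ (by linarith : (0:ℚ) ≤ nq),
    mul_nonneg (by linarith : (0:ℚ) ≤ β) (by linarith : (0:ℚ) ≤ nq)]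

lemma arith_off (β T nq minv x y z : ℚ) (hβ : β = 4*T*nq^2) (hT : 0 ≤ T) (hn : 2 ≤ nq)
    (hx : 0 ≤ x) (hy : 0 ≤ y) (hz : z ≤ T)
    (hmin : minv ≤ 12*nq - 1) :
    (3*β+T)*minv ≤ 12*nq*(3*β+T+(x+y-z)) := by
  have hβ0 : 0 ≤ β := by nlinarith
  refine arith_base β T nq minv _ (12*nq-1) (by linarith) hn hmin ?_
  -- (3β+T)(12nq−1) ≤ 12nq(3β+T) + 12nq(x+y−z)
  have f1 : nq*z ≤ nq*T := mul_le_mul_of_nonneg_left hz (by linarith)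
  have f2 : nq*T ≤ nq^2*T := by nlinarith
  have f3 : 0 ≤ nq*x := mul_nonneg (by linarith) hx
  have f4 : 0 ≤ nq*y := mul_nonneg (by linarith) hy
  nlinarith [f1, f2, f3, f4]

lemma arith_bal (β T nq minv x y z : ℚ) (hβ : β = 4*T*nq^2) (hT : 0 ≤ T) (hn : 2 ≤ nq)
    (hz : z ≤ x + y) (hmin : minv ≤ 12*nq) :
    (3*β+T)*minv ≤ 12*nq*(3*β+T+(x+y-z)) := by
  have hβ0 : 0 ≤ β := by nlinarith
  refine arith_base β T nq minv _ (12*nq) (by linarith) hn hmin ?_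
  have f1 : 12*nq*z ≤ 12*nq*(x+y) := mul_le_mul_of_nonneg_left hz (by linarith)
  nlinarith [f1]


lemma sum_ite_flip {n : ℕ} (P : Fin n → Prop) [DecidablePred P] (g : Fin n → ℚ) :
    (∑ i, if P i then 0 else g i) = ∑ i ∈ Finset.univ.filter (fun i => ¬ P i), g i := by
  rw [Finset.sum_filter]
  exact Finset.sum_congr rfl fun i _ => by rw [ite_not]

lemma sum_ind_eq {n : ℕ} (P Q : Fin n → Prop) [DecidablePred P] [DecidablePred Q]
    (h : ∀ i, P i ↔ Q i) :
    (∑ i, if P i then (1:ℚ) else 0) = ((Finset.univ.filter Q).card : ℚ) := by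
  rw [Finset.sum_congr rfl (fun i _ => if_congr (h i) rfl rfl), Finset.sum_boole]

lemma main_aux (n : ℕ) (hn : 1 < n) (a b c : Fin n → ℕ)
    (ha : ∀ i, 0 < a i) (hb : ∀ i, 0 < b i) (hc : ∀ i, 0 < c i)
    (hpair : ¬ ∃ i j : Fin n, ∃ h : i.val + j.val + 1 < n,
        a i + b j < c ⟨i.val + j.val + 1, h⟩)
    (S : Finset (V n)) (hv : V.v ∈ S) (hS : S ≠ Finset.univ) :
    (3 * (beta n a b c : ℚ) + (Tsum n a b c : ℚ)) * min (wOf n S) (wOf n Sᶜ)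
      ≤ 12 * n * cutCost n a b c S := by
  have hn0 : 0 < n := by omega
  have hnq : (2 : ℚ) ≤ (n : ℚ) := by exact_mod_cast hn
  have hT0 : (0 : ℚ) ≤ (Tsum n a b c : ℚ) := by positivity
  have hβ0 : (0 : ℚ) ≤ (beta n a b c : ℚ) := by positivity
  have hβT : (beta n a b c : ℚ) = 4 * (Tsum n a b c : ℚ) * (n : ℚ) ^ 2 := by
    rw [beta]; push_cast; ring
  have hcT : ∀ k : Fin n, (c k : ℚ) ≤ (Tsum n a b c : ℚ) := by
    intro k
    have h1 : c k ≤ Tsum n a b c :=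
      le_trans (Nat.le_add_left _ (a k + b k))
        (Finset.single_le_sum (f := fun i => a i + b i + c i)
          (fun i _ => Nat.zero_le _) (Finset.mem_univ k))
    exact_mod_cast h1
  have hsum24 : wOf n S + wOf n Sᶜ = 24 * n := wOf_add_compl S
  have hScne : Sᶜ.Nonempty :=
    Finset.nonempty_iff_ne_empty.mpr (fun h => hS ((Finset.compl_eq_empty_iff S).mp h))
  have hwS : 0 < wOf n S := wOf_pos S hn0 ⟨_, hv⟩
  have hwSc : 0 < wOf n Sᶜ := wOf_pos Sᶜ hn0 hScne
  have hminS : min (wOf n S) (wOf n Sᶜ) ≤ wOf n S := min_le_left _ _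
  have hminSc : min (wOf n S) (wOf n Sᶜ) ≤ wOf n Sᶜ := min_le_right _ _
  have hmin12 : min (wOf n S) (wOf n Sᶜ) ≤ 12 * n := by
    rcases le_total (wOf n S) (wOf n Sᶜ) with h | h
    · rw [min_eq_left h]; linarith
    · rw [min_eq_right h]; linarith
  have hmin0 : 0 < min (wOf n S) (wOf n Sᶜ) := lt_min hwS hwSc
  have hQ0 : (0:ℚ) ≤ 3 * (beta n a b c : ℚ) + (Tsum n a b c : ℚ) := by linarith
  have h12n : (0:ℚ) < 12 * n := by positivity
  have hcost := cutCost_eq a b c S hn0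
  have hM0 : (0:ℚ) ≤ 1210 * (n : ℚ) ^ 2 * (2 * (beta n a b c : ℚ) + (Tsum n a b c : ℚ)) := by
    positivity
  have hsA0 : (0:ℚ) ≤ ∑ i, (if (V.A i ∈ S ↔ nextV V.A V.u i ∈ S) then 0 else
      (beta n a b c : ℚ) + (a i : ℚ)) :=
    Finset.sum_nonneg fun i _ => by split <;> positivity
  have hsB0 : (0:ℚ) ≤ ∑ i, (if (V.B i ∈ S ↔ nextV V.B V.u i ∈ S) then 0 else
      (beta n a b c : ℚ) + (b i : ℚ)) :=
    Finset.sum_nonneg fun i _ => by split <;> positivity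
  have hsC0 : (0:ℚ) ≤ ∑ i, (if (V.C i ∈ S ↔ nextV V.C V.v i ∈ S) then 0 else
      (beta n a b c : ℚ) + (Tsum n a b c : ℚ) - (c i : ℚ)) := by
    refine Finset.sum_nonneg fun i _ => ?_
    split
    · exact le_rfl
    · have := hcT i; linarith
  -- the case where the cut cost is at least the huge special-edge cost
  have bigcase : 1210 * (n : ℚ) ^ 2 * (2 * (beta n a b c : ℚ) + (Tsum n a b c : ℚ))
      ≤ cutCost n a b c S →
      (3 * (beta n a b c : ℚ) + (Tsum n a b c : ℚ)) * min (wOf n S) (wOf n Sᶜ)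
        ≤ 12 * n * cutCost n a b c S := fun hMc =>
    arith_big _ _ _ _ _ hβT hT0 hnq hmin12 hMc
  have htA0 : (0:ℚ) ≤ (if (V.v ∈ S ↔ V.A ⟨0, hn0⟩ ∈ S) then 0 else
      1210 * (n : ℚ) ^ 2 * (2 * (beta n a b c : ℚ) + (Tsum n a b c : ℚ))) := by
    split <;> [exact le_rfl; exact hM0]
  have htB0 : (0:ℚ) ≤ (if (V.v ∈ S ↔ V.B ⟨0, hn0⟩ ∈ S) then 0 else
      1210 * (n : ℚ) ^ 2 * (2 * (beta n a b c : ℚ) + (Tsum n a b c : ℚ))) := by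
    split <;> [exact le_rfl; exact hM0]
  have htC0 : (0:ℚ) ≤ (if (V.u ∈ S ↔ V.C ⟨0, hn0⟩ ∈ S) then 0 else
      1210 * (n : ℚ) ^ 2 * (2 * (beta n a b c : ℚ) + (Tsum n a b c : ℚ))) := by
    split <;> [exact le_rfl; exact hM0]
  by_cases hEA : (V.v ∈ S ↔ V.A ⟨0, hn0⟩ ∈ S)
  case neg =>
    refine bigcase ?_
    rw [hcost, if_neg hEA]
    linarith
  by_cases hEB : (V.v ∈ S ↔ V.B ⟨0, hn0⟩ ∈ S)
  case neg =>
    refine bigcase ?_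
    rw [hcost, if_neg hEB]
    linarith
  by_cases hEC : (V.u ∈ S ↔ V.C ⟨0, hn0⟩ ∈ S)
  case neg =>
    refine bigcase ?_
    rw [hcost, if_neg hEC]
    linarith
  clear bigcase htA0 htB0 htC0 hM0
  -- all three special edges are uncut
  set FA := Finset.univ.filter (fun i => ¬(V.A i ∈ S ↔ nextV V.A V.u i ∈ S)) with hFAdef
  set FB := Finset.univ.filter (fun i => ¬(V.B i ∈ S ↔ nextV V.B V.u i ∈ S)) with hFBdef
  set FC := Finset.univ.filter (fun i => ¬(V.C i ∈ S ↔ nextV V.C V.v i ∈ S)) with hFCdef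
  have hmemFA : ∀ i, i ∈ FA ↔ ¬(V.A i ∈ S ↔ nextV V.A V.u i ∈ S) := fun i => by
    rw [hFAdef]; simp
  have hmemFB : ∀ i, i ∈ FB ↔ ¬(V.B i ∈ S ↔ nextV V.B V.u i ∈ S) := fun i => by
    rw [hFBdef]; simp
  have hmemFC : ∀ i, i ∈ FC ↔ ¬(V.C i ∈ S ↔ nextV V.C V.v i ∈ S) := fun i => by
    rw [hFCdef]; simp
  have hcost' : cutCost n a b c S = (∑ i ∈ FA, ((beta n a b c : ℚ) + (a i : ℚ)))
      + (∑ i ∈ FB, ((beta n a b c : ℚ) + (b i : ℚ)))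
      + (∑ i ∈ FC, ((beta n a b c : ℚ) + (Tsum n a b c : ℚ) - (c i : ℚ))) := by
    rw [hcost, if_pos hEA, if_pos hEB, if_pos hEC,
      sum_ite_flip _ (fun i => (beta n a b c : ℚ) + (a i : ℚ)),
      sum_ite_flip _ (fun i => (beta n a b c : ℚ) + (b i : ℚ)),
      sum_ite_flip _ (fun i => (beta n a b c : ℚ) + (Tsum n a b c : ℚ) - (c i : ℚ))]
    rw [← hFAdef, ← hFBdef, ← hFCdef]
    ring
  have hgeA : (FA.card : ℚ) * (beta n a b c : ℚ) ≤ ∑ i ∈ FA, ((beta n a b c : ℚ) + (a i : ℚ)) := by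
    have h := Finset.card_nsmul_le_sum FA (fun i => (beta n a b c : ℚ) + (a i : ℚ))
      (beta n a b c : ℚ) (fun i _ => by
        show (beta n a b c : ℚ) ≤ (beta n a b c : ℚ) + (a i : ℚ)
        have h0 : (0:ℚ) ≤ (a i : ℚ) := Nat.cast_nonneg _
        linarith)
    simpa [nsmul_eq_mul] using h
  have hgeB : (FB.card : ℚ) * (beta n a b c : ℚ) ≤ ∑ i ∈ FB, ((beta n a b c : ℚ) + (b i : ℚ)) := by
    have h := Finset.card_nsmul_le_sum FB (fun i => (beta n a b c : ℚ) + (b i : ℚ))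
      (beta n a b c : ℚ) (fun i _ => by
        show (beta n a b c : ℚ) ≤ (beta n a b c : ℚ) + (b i : ℚ)
        have h0 : (0:ℚ) ≤ (b i : ℚ) := Nat.cast_nonneg _
        linarith)
    simpa [nsmul_eq_mul] using h
  have hgeC : (FC.card : ℚ) * (beta n a b c : ℚ)
      ≤ ∑ i ∈ FC, ((beta n a b c : ℚ) + (Tsum n a b c : ℚ) - (c i : ℚ)) := by
    have h := Finset.card_nsmul_le_sum FC
      (fun i => (beta n a b c : ℚ) + (Tsum n a b c : ℚ) - (c i : ℚ))
      (beta n a b c : ℚ) (fun i _ => by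
        show (beta n a b c : ℚ) ≤ (beta n a b c : ℚ) + (Tsum n a b c : ℚ) - (c i : ℚ)
        have := hcT i
        linarith)
    simpa [nsmul_eq_mul] using h
  have hA0 : V.A ⟨0, hn0⟩ ∈ S := hEA.mp hv
  have hB0 : V.B ⟨0, hn0⟩ ∈ S := hEB.mp hv
  have hflipA : FA = ∅ → ∀ i, (V.A i ∈ S ↔ nextV V.A V.u i ∈ S) := by
    intro hFA i
    by_contra hcon
    have h := (hmemFA i).mpr hcon
    rw [hFA] at h
    exact absurd h (Finset.notMem_empty i)
  have hflipB : FB = ∅ → ∀ i, (V.B i ∈ S ↔ nextV V.B V.u i ∈ S) := by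
    intro hFB i
    by_contra hcon
    have h := (hmemFB i).mpr hcon
    rw [hFB] at h
    exact absurd h (Finset.notMem_empty i)
  have hflipC : FC = ∅ → ∀ i, (V.C i ∈ S ↔ nextV V.C V.v i ∈ S) := by
    intro hFC i
    by_contra hcon
    have h := (hmemFC i).mpr hcon
    rw [hFC] at h
    exact absurd h (Finset.notMem_empty i)
  rcases le_or_gt 4 (FA.card + FB.card + FC.card) with h4 | h4
  · -- at least four path edges cut
    have hcards : (4:ℚ) ≤ (FA.card : ℚ) + (FB.card : ℚ) + (FC.card : ℚ) := by
      exact_mod_cast h4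
    have hc4 : 4 * (beta n a b c : ℚ) ≤ cutCost n a b c S := by
      have hmul := mul_le_mul_of_nonneg_right hcards hβ0
      rw [hcost']
      linarith [hgeA, hgeB, hgeC]
    exact arith4 _ _ _ _ _ hβT hT0 hnq hmin12 hc4
  have h3 : FA.card + FB.card + FC.card ≤ 3 := by omega
  by_cases hu : V.u ∈ S
  · -- u and v both inside S
    have hC0 : V.C ⟨0, hn0⟩ ∈ S := hEC.mp hu
    have hfull : ¬(FA = ∅ ∧ FB = ∅ ∧ FC = ∅) := by
      rintro ⟨h1, h2, h3'⟩
      apply hS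
      rw [Finset.eq_univ_iff_forall]
      intro x
      cases x with
      | u => exact hu
      | v => exact hv
      | A i => exact ((path_const S V.A V.u hn0 (hflipA h1)).1 i).mpr hA0
      | B i => exact ((path_const S V.B V.u hn0 (hflipB h2)).1 i).mpr hB0
      | C i => exact ((path_const S V.C V.v hn0 (hflipC h3')).1 i).mpr hC0
    have hsingleA : FA.card ≠ 1 := by
      intro h1
      obtain ⟨i0, hi0⟩ := Finset.card_eq_one.mp h1
      have hD : ¬(V.A i0 ∈ S ↔ nextV V.A V.u i0 ∈ S) :=
        (hmemFA i0).mp (hi0 ▸ Finset.mem_singleton_self i0)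
      have huniq : ∀ i, i ≠ i0 → (V.A i ∈ S ↔ nextV V.A V.u i ∈ S) := by
        intro i hne
        by_contra hcon
        have hi : i ∈ FA := (hmemFA i).mpr hcon
        rw [hi0, Finset.mem_singleton] at hi
        exact hne hi
      exact ((path_single S V.A V.u hn0 i0 hD huniq).2.2.mp hu) hA0
    have hsingleB : FB.card ≠ 1 := by
      intro h1
      obtain ⟨i0, hi0⟩ := Finset.card_eq_one.mp h1
      have hD : ¬(V.B i0 ∈ S ↔ nextV V.B V.u i0 ∈ S) :=
        (hmemFB i0).mp (hi0 ▸ Finset.mem_singleton_self i0)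
      have huniq : ∀ i, i ≠ i0 → (V.B i ∈ S ↔ nextV V.B V.u i ∈ S) := by
        intro i hne
        by_contra hcon
        have hi : i ∈ FB := (hmemFB i).mpr hcon
        rw [hi0, Finset.mem_singleton] at hi
        exact hne hi
      exact ((path_single S V.B V.u hn0 i0 hD huniq).2.2.mp hu) hB0
    have hsingleC : FC.card ≠ 1 := by
      intro h1
      obtain ⟨i0, hi0⟩ := Finset.card_eq_one.mp h1
      have hD : ¬(V.C i0 ∈ S ↔ nextV V.C V.v i0 ∈ S) :=
        (hmemFC i0).mp (hi0 ▸ Finset.mem_singleton_self i0)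
      have huniq : ∀ i, i ≠ i0 → (V.C i ∈ S ↔ nextV V.C V.v i ∈ S) := by
        intro i hne
        by_contra hcon
        have hi : i ∈ FC := (hmemFC i).mpr hcon
        rw [hi0, Finset.mem_singleton] at hi
        exact hne hi
      exact ((path_single S V.C V.v hn0 i0 hD huniq).2.2.mp hv) hC0
    have h2le : 2 ≤ FA.card + FB.card + FC.card := by
      rcases Nat.lt_or_ge (FA.card + FB.card + FC.card) 2 with hlt | hge
      · exfalso
        have hA' : FA.card = 0 := by omega
        have hB' : FB.card = 0 := by omega
        have hC' : FC.card = 0 := by omega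
        exact hfull ⟨Finset.card_eq_zero.mp hA', Finset.card_eq_zero.mp hB',
          Finset.card_eq_zero.mp hC'⟩
      · exact hge
    have hcards : (2:ℚ) ≤ (FA.card : ℚ) + (FB.card : ℚ) + (FC.card : ℚ) := by
      exact_mod_cast h2le
    have hc2 : 2 * (beta n a b c : ℚ) ≤ cutCost n a b c S := by
      have hmul := mul_le_mul_of_nonneg_right hcards hβ0
      rw [hcost']
      linarith [hgeA, hgeB, hgeC]
    have hwSc3 : wOf n Sᶜ ≤ 3 * n := by
      rw [wOf_eq Sᶜ]
      have hu' : V.u ∉ Sᶜ := by simp [hu]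
      have hv' : V.v ∉ Sᶜ := by simp [hv]
      rw [if_neg hu', if_neg hv']
      have bnd : ∀ (P : Fin n → Prop) (_ : DecidablePred P),
          (∑ i, if P i then (1:ℚ) else 0) ≤ n := by
        intro P hP
        calc (∑ i, if P i then (1:ℚ) else 0) ≤ ∑ _i : Fin n, (1:ℚ) :=
              Finset.sum_le_sum (fun i _ => by split <;> norm_num)
          _ = n := by simp
      have b1 := bnd (fun i => V.A i ∈ Sᶜ) (by infer_instance)
      have b2 := bnd (fun i => V.B i ∈ Sᶜ) (by infer_instance)
      have b3 := bnd (fun i => V.C i ∈ Sᶜ) (by infer_instance)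
      linarith
    have hmin3 : min (wOf n S) (wOf n Sᶜ) ≤ 3 * n := hminSc.trans hwSc3
    exact arith2 _ _ _ _ _ hβT hT0 hnq hmin3 hc2
  · -- u outside S : exactly one cut edge per path
    have hC0 : V.C ⟨0, hn0⟩ ∉ S := fun h => hu (hEC.mpr h)
    have hAne : FA ≠ ∅ := by
      intro h1
      exact hu (((path_const S V.A V.u hn0 (hflipA h1)).2).mpr hA0)
    have hBne : FB ≠ ∅ := by
      intro h1
      exact hu (((path_const S V.B V.u hn0 (hflipB h1)).2).mpr hB0)
    have hCne : FC ≠ ∅ := by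
      intro h1
      exact hC0 (((path_const S V.C V.v hn0 (hflipC h1)).1 ⟨0, hn0⟩).mpr
        (((path_const S V.C V.v hn0 (hflipC h1)).2).mp hv))
    have hA1 : FA.card = 1 := by
      have := Finset.card_pos.mpr (Finset.nonempty_of_ne_empty hAne)
      have := Finset.card_pos.mpr (Finset.nonempty_of_ne_empty hBne)
      have := Finset.card_pos.mpr (Finset.nonempty_of_ne_empty hCne)
      omega
    have hB1 : FB.card = 1 := by
      have := Finset.card_pos.mpr (Finset.nonempty_of_ne_empty hAne)
      have := Finset.card_pos.mpr (Finset.nonempty_of_ne_empty hBne)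
      have := Finset.card_pos.mpr (Finset.nonempty_of_ne_empty hCne)
      omega
    have hC1 : FC.card = 1 := by
      have := Finset.card_pos.mpr (Finset.nonempty_of_ne_empty hAne)
      have := Finset.card_pos.mpr (Finset.nonempty_of_ne_empty hBne)
      have := Finset.card_pos.mpr (Finset.nonempty_of_ne_empty hCne)
      omega
    obtain ⟨iA, hiA⟩ := Finset.card_eq_one.mp hA1
    obtain ⟨iB, hiB⟩ := Finset.card_eq_one.mp hB1
    obtain ⟨kC, hkC⟩ := Finset.card_eq_one.mp hC1
    -- membership characterisations
    have hDA : ¬(V.A iA ∈ S ↔ nextV V.A V.u iA ∈ S) :=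
      (hmemFA iA).mp (hiA ▸ Finset.mem_singleton_self iA)
    have huniqA : ∀ i, i ≠ iA → (V.A i ∈ S ↔ nextV V.A V.u i ∈ S) := by
      intro i hne
      by_contra hcon
      have hi : i ∈ FA := (hmemFA i).mpr hcon
      rw [hiA, Finset.mem_singleton] at hi
      exact hne hi
    have hDB : ¬(V.B iB ∈ S ↔ nextV V.B V.u iB ∈ S) :=
      (hmemFB iB).mp (hiB ▸ Finset.mem_singleton_self iB)
    have huniqB : ∀ i, i ≠ iB → (V.B i ∈ S ↔ nextV V.B V.u i ∈ S) := by
      intro i hne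
      by_contra hcon
      have hi : i ∈ FB := (hmemFB i).mpr hcon
      rw [hiB, Finset.mem_singleton] at hi
      exact hne hi
    have hDC : ¬(V.C kC ∈ S ↔ nextV V.C V.v kC ∈ S) :=
      (hmemFC kC).mp (hkC ▸ Finset.mem_singleton_self kC)
    have huniqC : ∀ i, i ≠ kC → (V.C i ∈ S ↔ nextV V.C V.v i ∈ S) := by
      intro i hne
      by_contra hcon
      have hi : i ∈ FC := (hmemFC i).mpr hcon
      rw [hkC, Finset.mem_singleton] at hi
      exact hne hi
    obtain ⟨memA1, memA2, -⟩ := path_single S V.A V.u hn0 iA hDA huniqA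
    obtain ⟨memB1, memB2, -⟩ := path_single S V.B V.u hn0 iB hDB huniqB
    obtain ⟨memC1, memC2, -⟩ := path_single S V.C V.v hn0 kC hDC huniqC
    have memA : ∀ t : Fin n, (V.A t ∈ S ↔ t ≤ iA) := by
      intro t
      rcases le_or_gt t.val iA.val with h | h
      · exact iff_of_true ((memA1 t h).mpr hA0) (Fin.le_def.mpr h)
      · exact iff_of_false (fun hin => ((memA2 t h).mp hin) hA0)
          (by rw [Fin.le_def]; omega)
    have memB : ∀ t : Fin n, (V.B t ∈ S ↔ t ≤ iB) := by
      intro t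
      rcases le_or_gt t.val iB.val with h | h
      · exact iff_of_true ((memB1 t h).mpr hB0) (Fin.le_def.mpr h)
      · exact iff_of_false (fun hin => ((memB2 t h).mp hin) hB0)
          (by rw [Fin.le_def]; omega)
    have memC : ∀ t : Fin n, (V.C t ∈ S ↔ kC < t) := by
      intro t
      rcases le_or_gt t.val kC.val with h | h
      · exact iff_of_false (fun hin => hC0 ((memC1 t h).mp hin))
          (by rw [Fin.lt_def]; omega)
      · exact iff_of_true ((memC2 t h).mpr hC0) (Fin.lt_def.mpr h)
    -- cut cost value
    have hcostval : cutCost n a b c S = 3 * (beta n a b c : ℚ) + (Tsum n a b c : ℚ)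
        + ((a iA : ℚ) + (b iB : ℚ) - (c kC : ℚ)) := by
      rw [hcost', hiA, hiB, hkC, Finset.sum_singleton, Finset.sum_singleton,
        Finset.sum_singleton]
      ring
    -- weight value
    have hNA : (∑ i, if V.A i ∈ S then (1:ℚ) else 0) = (iA.val : ℚ) + 1 := by
      rw [sum_ind_eq _ (fun i => i ≤ iA) memA, card_filter_le]
      push_cast
      ring
    have hNB : (∑ i, if V.B i ∈ S then (1:ℚ) else 0) = (iB.val : ℚ) + 1 := by
      rw [sum_ind_eq _ (fun i => i ≤ iB) memB, card_filter_le]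
      push_cast
      ring
    have hNC : (∑ i, if V.C i ∈ S then (1:ℚ) else 0) = (n : ℚ) - 1 - (kC.val : ℚ) := by
      rw [sum_ind_eq _ (fun i => kC < i) memC, card_filter_gt]
      have h1 : kC.val ≤ n - 1 := by have := kC.isLt; omega
      have h2 : (1:ℕ) ≤ n := hn0
      rw [Nat.cast_sub h1, Nat.cast_sub h2]
      push_cast
      ring
    have hwSval : wOf n S = 11 * n + ((iA.val : ℚ) + 1) + ((iB.val : ℚ) + 1)
        + ((n : ℚ) - 1 - (kC.val : ℚ)) := by
      rw [wOf_eq S, if_neg hu, if_pos hv, hNA, hNB, hNC]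
      ring
    have hwScval : wOf n Sᶜ = 24 * n - wOf n S := by linarith
    have hiAn : (iA.val : ℚ) < n := by exact_mod_cast iA.isLt
    have hiBn : (iB.val : ℚ) < n := by exact_mod_cast iB.isLt
    have hkCn : (kC.val : ℚ) < n := by exact_mod_cast kC.isLt
    have ha0 : (0:ℚ) ≤ (a iA : ℚ) := by positivity
    have hb0 : (0:ℚ) ≤ (b iB : ℚ) := by positivity
    have hc0 : (0:ℚ) ≤ (c kC : ℚ) := by positivity
    have hckT := hcT kC
    rcases Nat.lt_trichotomy (iA.val + iB.val + 1) kC.val with hlt | heq | hgt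
    · -- k strictly bigger : wS ≤ 12n - 1
      have hcast : (iA.val : ℚ) + (iB.val : ℚ) + 2 ≤ (kC.val : ℚ) := by
        exact_mod_cast hlt
      have hwSle : wOf n S ≤ 12 * n - 1 := by rw [hwSval]; linarith
      have hminle : min (wOf n S) (wOf n Sᶜ) ≤ 12 * n - 1 := hminS.trans hwSle
      rw [hcostval]
      exact arith_off _ _ _ _ _ _ _ hβT hT0 hnq ha0 hb0 hckT hminle
    · -- balanced : use the convolution hypothesis
      have hklt : iA.val + iB.val + 1 < n := by rw [heq]; exact kC.isLt
      have hcab : c kC ≤ a iA + b iB := by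
        by_contra hcon
        push_neg at hcon
        refine hpair ⟨iA, iB, hklt, ?_⟩
        have hkeq : (⟨iA.val + iB.val + 1, hklt⟩ : Fin n) = kC := Fin.ext heq
        rw [hkeq]
        exact hcon
      have hcabq : (c kC : ℚ) ≤ (a iA : ℚ) + (b iB : ℚ) := by exact_mod_cast hcab
      rw [hcostval]
      exact arith_bal _ _ _ _ _ _ _ hβT hT0 hnq hcabq hmin12
    · -- k strictly smaller : wSᶜ ≤ 12n - 1
      have hcast : (kC.val : ℚ) + 1 ≤ (iA.val : ℚ) + (iB.val : ℚ) + 1 := by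
        have : kC.val + 1 ≤ iA.val + iB.val + 1 := by omega
        exact_mod_cast this
      have hwSle : wOf n Sᶜ ≤ 12 * n - 1 := by rw [hwScval, hwSval]; linarith
      have hminle : min (wOf n S) (wOf n Sᶜ) ≤ 12 * n - 1 := hminSc.trans hwSle
      rw [hcostval]
      exact arith_off _ _ _ _ _ _ _ hβT hT0 hnq ha0 hb0 hckT hminle

end MainAux

section Fwd

def fwdP (n : ℕ) (i j k : Fin n) : V n → Bool
  | V.u => false
  | V.v => true
  | V.A t => decide (t ≤ i)
  | V.B t => decide (t ≤ j)
  | V.C t => decide (k < t)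

def fwdS (n : ℕ) (i j k : Fin n) : Finset (V n) :=
  Finset.univ.filter (fun x => fwdP n i j k x = true)

variable {n : ℕ} (i j k : Fin n)

lemma fwd_u : V.u ∉ fwdS n i j k := by rw [fwdS, Finset.mem_filter]; simp [fwdP]
lemma fwd_v : V.v ∈ fwdS n i j k := by rw [fwdS, Finset.mem_filter]; simp [fwdP]
lemma fwd_A (t : Fin n) : V.A t ∈ fwdS n i j k ↔ t ≤ i := by rw [fwdS, Finset.mem_filter]; simp [fwdP]
lemma fwd_B (t : Fin n) : V.B t ∈ fwdS n i j k ↔ t ≤ j := by rw [fwdS, Finset.mem_filter]; simp [fwdP]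
lemma fwd_C (t : Fin n) : V.C t ∈ fwdS n i j k ↔ k < t := by rw [fwdS, Finset.mem_filter]; simp [fwdP]

end Fwd


/-- The minimum quotient is at least `(3β + T)/(12n)` iff there is no pair `i, j`
(1-indexed) with `i + j ≤ n` and `a_i + b_j < c_{i+j}`. -/
theorem min_quotient_iff_convolution (n : ℕ) (hn : 1 < n) (a b c : Fin n → ℕ)
    (ha : ∀ i, 0 < a i) (hb : ∀ i, 0 < b i) (hc : ∀ i, 0 < c i) :
    (∀ S : Finset (V n), S.Nonempty → S ≠ Finset.univ →
      (3 * (beta n a b c : ℚ) + (Tsum n a b c : ℚ)) / (12 * n) ≤ quotientVal n a b c S)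
    ↔ ¬ ∃ i j : Fin n, ∃ h : i.val + j.val + 1 < n,
        a i + b j < c ⟨i.val + j.val + 1, h⟩ := by
  have hn0 : 0 < n := by omega
  have h12n : (0:ℚ) < 12 * n := by positivity
  constructor
  · -- if the quotient bound holds, there is no violating pair
    intro hall
    rintro ⟨i, j, hlt, hviol⟩
    set k : Fin n := ⟨i.val + j.val + 1, hlt⟩ with hkdef
    set S : Finset (V n) := fwdS n i j k with hSdef
    have hu : V.u ∉ S := fwd_u i j k
    have hv : V.v ∈ S := fwd_v i j k
    have hA : ∀ t, V.A t ∈ S ↔ t ≤ i := fwd_A i j k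
    have hB : ∀ t, V.B t ∈ S ↔ t ≤ j := fwd_B i j k
    have hC : ∀ t, V.C t ∈ S ↔ k < t := fwd_C i j k
    -- endpoints of the three special edges are on the expected sides
    have hEA : (V.v ∈ S ↔ V.A ⟨0, hn0⟩ ∈ S) :=
      iff_of_true hv ((hA _).mpr (Fin.le_def.mpr (Nat.zero_le _)))
    have hEB : (V.v ∈ S ↔ V.B ⟨0, hn0⟩ ∈ S) :=
      iff_of_true hv ((hB _).mpr (Fin.le_def.mpr (Nat.zero_le _)))
    have hEC : (V.u ∈ S ↔ V.C ⟨0, hn0⟩ ∈ S) := by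
      refine iff_of_false hu ?_
      rw [hC]
      rw [Fin.lt_def]
      simp [hkdef]
    -- flip conditions along the paths
    have condA : ∀ t : Fin n, (V.A t ∈ S ↔ nextV V.A V.u t ∈ S) ↔ ¬(t = i) := by
      intro t
      unfold nextV
      split
      case isTrue h =>
        rw [hA, hA, Fin.le_def, Fin.le_def, Fin.ext_iff]
        simp only [Fin.val_mk]
        omega
      case isFalse h =>
        rw [hA, iff_false_intro hu, Fin.le_def, Fin.ext_iff]
        have h1 := i.isLt
        have h2 := t.isLt
        simp only [iff_false]
        omega
    have condB : ∀ t : Fin n, (V.B t ∈ S ↔ nextV V.B V.u t ∈ S) ↔ ¬(t = j) := by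
      intro t
      unfold nextV
      split
      case isTrue h =>
        rw [hB, hB, Fin.le_def, Fin.le_def, Fin.ext_iff]
        simp only [Fin.val_mk]
        omega
      case isFalse h =>
        rw [hB, iff_false_intro hu, Fin.le_def, Fin.ext_iff]
        have h1 := j.isLt
        have h2 := t.isLt
        simp only [iff_false]
        omega
    have condC : ∀ t : Fin n, (V.C t ∈ S ↔ nextV V.C V.v t ∈ S) ↔ ¬(t = k) := by
      intro t
      unfold nextV
      split
      case isTrue h =>
        rw [hC, hC, Fin.lt_def, Fin.lt_def, Fin.ext_iff]
        simp only [Fin.val_mk]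
        omega
      case isFalse h =>
        rw [hC, iff_true_intro hv, Fin.lt_def, Fin.ext_iff]
        have h1 := k.isLt
        have h2 := t.isLt
        simp only [iff_true]
        omega
    -- the cut cost
    have hcostval : cutCost n a b c S
        = 3 * (beta n a b c : ℚ) + (Tsum n a b c : ℚ)
          + ((a i : ℚ) + (b j : ℚ) - (c k : ℚ)) := by
      rw [cutCost_eq a b c S hn0, if_pos hEA, if_pos hEB, if_pos hEC]
      have eA : (∑ t, if (V.A t ∈ S ↔ nextV V.A V.u t ∈ S) then 0
          else (beta n a b c : ℚ) + (a t : ℚ)) = (beta n a b c : ℚ) + (a i : ℚ) := by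
        rw [Finset.sum_congr rfl (fun t _ => if_congr (condA t) rfl rfl)]
        rw [Finset.sum_congr rfl (fun t _ => ite_not (t = i) 0 ((beta n a b c : ℚ) + (a t : ℚ)))]
        rw [Finset.sum_ite_eq' Finset.univ i (fun t => (beta n a b c : ℚ) + (a t : ℚ))]
        simp
      have eB : (∑ t, if (V.B t ∈ S ↔ nextV V.B V.u t ∈ S) then 0
          else (beta n a b c : ℚ) + (b t : ℚ)) = (beta n a b c : ℚ) + (b j : ℚ) := by
        rw [Finset.sum_congr rfl (fun t _ => if_congr (condB t) rfl rfl)]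
        rw [Finset.sum_congr rfl (fun t _ => ite_not (t = j) 0 ((beta n a b c : ℚ) + (b t : ℚ)))]
        rw [Finset.sum_ite_eq' Finset.univ j (fun t => (beta n a b c : ℚ) + (b t : ℚ))]
        simp
      have eC : (∑ t, if (V.C t ∈ S ↔ nextV V.C V.v t ∈ S) then 0
          else (beta n a b c : ℚ) + (Tsum n a b c : ℚ) - (c t : ℚ))
          = (beta n a b c : ℚ) + (Tsum n a b c : ℚ) - (c k : ℚ) := by
        rw [Finset.sum_congr rfl (fun t _ => if_congr (condC t) rfl rfl)]
        rw [Finset.sum_congr rfl (fun t _ =>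
          ite_not (t = k) 0 ((beta n a b c : ℚ) + (Tsum n a b c : ℚ) - (c t : ℚ)))]
        rw [Finset.sum_ite_eq' Finset.univ k
          (fun t => (beta n a b c : ℚ) + (Tsum n a b c : ℚ) - (c t : ℚ))]
        simp
      rw [eA, eB, eC]
      ring
    -- the weights
    have hwSval : wOf n S = 12 * n := by
      have hNA : (∑ t, if V.A t ∈ S then (1:ℚ) else 0) = (i.val : ℚ) + 1 := by
        rw [sum_ind_eq _ (fun t => t ≤ i) hA, card_filter_le]; push_cast; ring
      have hNB : (∑ t, if V.B t ∈ S then (1:ℚ) else 0) = (j.val : ℚ) + 1 := by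
        rw [sum_ind_eq _ (fun t => t ≤ j) hB, card_filter_le]; push_cast; ring
      have hNC : (∑ t, if V.C t ∈ S then (1:ℚ) else 0) = (n : ℚ) - 1 - (k.val : ℚ) := by
        rw [sum_ind_eq _ (fun t => k < t) hC, card_filter_gt]
        have h1 : k.val ≤ n - 1 := by have := k.isLt; omega
        have h2 : (1:ℕ) ≤ n := hn0
        rw [Nat.cast_sub h1, Nat.cast_sub h2]
        push_cast
        ring
      have hkval : (k.val : ℚ) = (i.val : ℚ) + (j.val : ℚ) + 1 := by
        rw [hkdef]; push_cast; ring
      rw [wOf_eq S, if_neg hu, if_pos hv, hNA, hNB, hNC, hkval]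
      ring
    have hwScval : wOf n Sᶜ = 12 * n := by
      have := wOf_add_compl S
      linarith
    have hSne : S.Nonempty := ⟨V.v, hv⟩
    have hSuniv : S ≠ Finset.univ := fun heq => hu (by rw [heq]; exact Finset.mem_univ _)
    have hq := hall S hSne hSuniv
    rw [quotientVal, hwSval, hwScval, min_self, hcostval, div_le_div_iff₀ h12n h12n] at hq
    have hviolq : ((a i : ℚ) + (b j : ℚ)) + 1 ≤ (c k : ℚ) := by
      have : a i + b j + 1 ≤ c k := hviol
      exact_mod_cast this
    nlinarith [hq, hviolq, h12n]
  · -- if there is no violating pair, the quotient bound holds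
    intro hpair S hSne hSuniv
    have hwS : 0 < wOf n S := wOf_pos S hn0 hSne
    have hwSc : 0 < wOf n Sᶜ := wOf_pos Sᶜ hn0
      (Finset.nonempty_iff_ne_empty.mpr (fun h => hSuniv ((Finset.compl_eq_empty_iff S).mp h)))
    have hmin0 : 0 < min (wOf n S) (wOf n Sᶜ) := lt_min hwS hwSc
    rw [quotientVal, div_le_div_iff₀ h12n hmin0]
    by_cases hv : V.v ∈ S
    · have h := main_aux n hn a b c ha hb hc hpair S hv hSuniv
      linarith
    · have hv' : V.v ∈ Sᶜ := Finset.mem_compl.mpr hv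
      have hScuniv : Sᶜ ≠ Finset.univ := (Finset.compl_ne_univ_iff_nonempty S).mpr hSne
      have h := main_aux n hn a b c ha hb hc hpair Sᶜ hv' hScuniv
      rw [compl_compl] at h
      have hcc : cutCost n a b c Sᶜ = cutCost n a b c S := by
        unfold cutCost; rw [cut_compl]
      rw [hcc, min_comm] at h
      linarith

end SCLB
end
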